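/- For γ ∈ [0,1] and a probability measure f on ℝ³ with finite (2+γ)-th moment, setting b(f,v) = ∫ b(v-w) f(dw) and a(f,v) = ∫ a(v-w) f(dw), there is a constant C depending only on γ such that for all v, w ∈ ℝ³: (i) |b(f,v)| ≤ C(|v|^{1+γ} + m_{1+γ}(f)); (ii) |b(f,v)-b(f,w)| ≤ C|v-w|(|v|^γ + |w|^γ + m_γ(f)); (iii) ‖a(f,v)‖ ≤ C(|v|^{2+γ} + m_{2+γ}(f)); (iv) ‖a(f,v)-a(f,w)‖ ≤ C|v-w|(|v|^{1+γ} + |w|^{1+γ} + m_{1+γ}(f)). -/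
import Mathlib


noncomputable section
open Matrix MeasureTheory
open scoped Classical

abbrev E3 := EuclideanSpace ℝ (Fin 3)
abbrev M3 := Matrix (Fin 3) (Fin 3) ℝ

def proj3 (v : E3) : M3 :=
  1 - (‖v‖ ^ 2)⁻¹ • Matrix.vecMulVec (fun i => v i) (fun i => v i)

def amat (γ : ℝ) (v : E3) : M3 := if v = 0 then 0 else (‖v‖ ^ (2 + γ)) • proj3 v

def bvec (γ : ℝ) (v : E3) : E3 := (-2 * ‖v‖ ^ γ) • v

def frobSq (A : M3) : ℝ := Matrix.trace (A * Aᵀ)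

def frobNorm (A : M3) : ℝ := Real.sqrt (frobSq A)

/-- `b(f,v) = ∫ b(v-w) f(dw)`. -/
def bInt (γ : ℝ) (f : Measure E3) (v : E3) : E3 := ∫ w, bvec γ (v - w) ∂f

/-- `a(f,v) = ∫ a(v-w) f(dw)` (entrywise integral). -/
def aInt (γ : ℝ) (f : Measure E3) (v : E3) : M3 :=
  Matrix.of fun i j => ∫ w, amat γ (v - w) i j ∂f

/-- `m_q(f) = ∫ |v|^q f(dv)`. -/
def mom (q : ℝ) (f : Measure E3) : ℝ := ∫ v, ‖v‖ ^ q ∂f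

/-! ### Auxiliary scalar lemmas -/

section Scalar
variable {γ : ℝ}

lemma lemA (hγ1 : γ ≤ 1) {s t : ℝ} (hs : 0 ≤ s) (hst : s ≤ t) :
    t ^ γ * s ≤ t * s ^ γ := by
  have ht : 0 ≤ t := hs.trans hst
  rcases eq_or_lt_of_le hs with h0 | hs'
  · rcases eq_or_lt_of_le ht with h0' | ht'
    · rw [← h0, ← h0']; simp
    · rw [← h0]; simp [Real.rpow_natCast]
      positivity
  · have key : s ^ (1 - γ) ≤ t ^ (1 - γ) := Real.rpow_le_rpow hs hst (by linarith)
    have ht' : 0 < t := lt_of_lt_of_le hs' hst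
    have h1 : t ^ γ * s = t ^ γ * (s ^ γ * s ^ (1 - γ)) := by
      rw [← Real.rpow_add hs']; norm_num
    have h2 : t * s ^ γ = t ^ γ * (s ^ γ * t ^ (1 - γ)) := by
      rw [show t ^ γ * (s ^ γ * t ^ (1 - γ)) = t ^ γ * t ^ (1-γ) * s ^ γ by ring,
        ← Real.rpow_add ht']; norm_num
    rw [h1, h2]
    have h3 : (0:ℝ) ≤ t ^ γ * s ^ γ :=
      mul_nonneg (Real.rpow_nonneg ht γ) (Real.rpow_nonneg hs γ)
    nlinarith [mul_le_mul_of_nonneg_left key h3]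

lemma lemB (hγ1 : γ ≤ 1) {s t : ℝ} (hs : 0 ≤ s) (hst : s ≤ t) :
    (t ^ γ - s ^ γ) * s ≤ (t - s) * s ^ γ := by
  have := lemA hγ1 hs hst
  nlinarith [Real.rpow_nonneg hs γ]

lemma lemC (hγ0 : 0 ≤ γ) {a b : ℝ} (ha : 0 ≤ a) (hb : 0 ≤ b) :
    a ^ γ * b ≤ a ^ (1 + γ) + b ^ (1 + γ) := by
  rcases le_total b a with h | h
  · have h1 : a ^ γ * b ≤ a ^ γ * a :=
      mul_le_mul_of_nonneg_left h (Real.rpow_nonneg ha γ)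
    have h2 : a ^ γ * a = a ^ (1 + γ) := by
      rcases eq_or_lt_of_le ha with h0 | ha'
      · rw [← h0]; rw [Real.zero_rpow (by linarith : 1 + γ ≠ 0)]; ring
      · rw [show (1:ℝ) + γ = γ + 1 by ring, Real.rpow_add ha', Real.rpow_one]
    calc a ^ γ * b ≤ a ^ γ * a := h1
      _ = a ^ (1+γ) := h2
      _ ≤ a ^ (1+γ) + b ^ (1+γ) := by nlinarith [Real.rpow_nonneg hb (1+γ)]
  · have h1 : a ^ γ ≤ b ^ γ := Real.rpow_le_rpow ha h hγ0
    have h2 : b ^ γ * b = b ^ (1 + γ) := by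
      rcases eq_or_lt_of_le hb with h0 | hb'
      · rw [← h0]; rw [Real.zero_rpow (by linarith : 1 + γ ≠ 0)]; ring
      · rw [show (1:ℝ) + γ = γ + 1 by ring, Real.rpow_add hb', Real.rpow_one]
    calc a ^ γ * b ≤ b ^ γ * b := mul_le_mul_of_nonneg_right h1 hb
      _ = b ^ (1+γ) := h2
      _ ≤ a ^ (1+γ) + b ^ (1+γ) := by nlinarith [Real.rpow_nonneg ha (1+γ)]

lemma rpow_succ {x p : ℝ} (hx : 0 ≤ x) (hp : 0 ≤ p) : x ^ (1 + p) = x * x ^ p := by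
  rcases eq_or_lt_of_le hx with h0 | hx'
  · rw [← h0, Real.zero_rpow (by linarith : 1 + p ≠ 0)]; ring
  · rw [Real.rpow_add hx', Real.rpow_one]

lemma lemD (hγ0 : 0 ≤ γ) (hγ1 : γ ≤ 1) {s t : ℝ} (hs : 0 ≤ s) (hst : s ≤ t) :
    t ^ (2 + γ) - s ^ (2 + γ) ≤ 2 * (t - s) * (t ^ (1 + γ) + s ^ (1 + γ)) := by
  have ht : 0 ≤ t := hs.trans hst
  have e1 : t ^ (2 + γ) = t * t ^ (1 + γ) := by
    rw [show (2:ℝ) + γ = 1 + (1 + γ) by ring]; exact rpow_succ ht (by linarith)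
  have e2 : s ^ (2 + γ) = s * s ^ (1 + γ) := by
    rw [show (2:ℝ) + γ = 1 + (1 + γ) by ring]; exact rpow_succ hs (by linarith)
  have e3 : t ^ (1 + γ) = t * t ^ γ := rpow_succ ht hγ0
  have e4 : s ^ (1 + γ) = s * s ^ γ := rpow_succ hs hγ0
  have hB := lemB hγ1 hs hst
  have h5 : s * t ^ γ ≤ t ^ (1 + γ) := by
    rw [e3]; exact mul_le_mul_of_nonneg_right hst (Real.rpow_nonneg ht γ)
  have h6 : s ^ (1+γ) ≤ t ^ (1+γ) := Real.rpow_le_rpow hs hst (by linarith)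
  nlinarith [Real.rpow_nonneg hs γ, Real.rpow_nonneg ht γ, Real.rpow_nonneg hs (1+γ),
    Real.rpow_nonneg ht (1+γ), sq_nonneg s, mul_le_mul_of_nonneg_left hB hs]

lemma lemE {p a b : ℝ} (hp : 0 ≤ p) (ha : 0 ≤ a) (hb : 0 ≤ b) :
    (a + b) ^ p ≤ 2 ^ p * (a ^ p + b ^ p) := by
  have h1 : a + b ≤ 2 * max a b := by
    rcases le_total a b with h | h <;> simp [max_eq_right, max_eq_left, h] <;> linarith
  have h2 : (a + b) ^ p ≤ (2 * max a b) ^ p :=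
    Real.rpow_le_rpow (by linarith) h1 hp
  have h3 : (2 * max a b : ℝ) ^ p = 2 ^ p * (max a b) ^ p :=
    Real.mul_rpow (by norm_num) (le_max_of_le_left ha)
  have h4 : (max a b) ^ p ≤ a ^ p + b ^ p := by
    rcases le_total a b with h | h
    · simp [max_eq_right h]; nlinarith [Real.rpow_nonneg ha p]
    · simp [max_eq_left h]; nlinarith [Real.rpow_nonneg hb p]
  calc (a+b)^p ≤ (2 * max a b)^p := h2
    _ = 2^p * (max a b)^p := h3
    _ ≤ 2^p * (a^p + b^p) := by
        have : (0:ℝ) ≤ 2^p := Real.rpow_nonneg (by norm_num) p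
        nlinarith

lemma lemF {p a b : ℝ} (hp : 0 ≤ p) (hp3 : p ≤ 3) (ha : 0 ≤ a) (hb : 0 ≤ b) :
    (a + b) ^ p ≤ 8 * (a ^ p + b ^ p) := by
  have h2 : (2:ℝ) ^ p ≤ 2 ^ (3:ℝ) :=
    Real.rpow_le_rpow_of_exponent_le (by norm_num) hp3
  have h3 : (2:ℝ) ^ (3:ℝ) = 8 := by
    rw [show (3:ℝ) = ((3:ℕ):ℝ) by norm_num, Real.rpow_natCast]; norm_num
  have h4 := lemE hp ha hb
  have h5 : (0:ℝ) ≤ a ^ p + b ^ p := by positivity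
  nlinarith

lemma absub (a b : ℝ) : |a - b| ≤ |a| + |b| := by
  calc |a - b| = |a + -b| := by ring_nf
    _ ≤ |a| + |-b| := abs_add_le _ _
    _ = |a| + |b| := by rw [abs_neg]

end Scalar

/-! ### Vector / matrix pointwise lemmas -/

section Pointwise
variable {γ : ℝ}

lemma coord_abs_le (v : E3) (i : Fin 3) : |v i| ≤ ‖v‖ := by
  have h := EuclideanSpace.norm_eq v
  rw [h]
  rw [show |v i| = Real.sqrt (|v i|^2) by rw [Real.sqrt_sq_eq_abs, abs_abs]]
  apply Real.sqrt_le_sqrt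
  rw [sq_abs]
  have : ∀ j : Fin 3, ‖v j‖ ^ 2 = v j ^ 2 := fun j => by rw [Real.norm_eq_abs, sq_abs]
  simp only [this]
  exact Finset.single_le_sum (f := fun j => v j ^ 2) (fun j _ => sq_nonneg _) (Finset.mem_univ i)

lemma norm_bvec (hγ0 : 0 ≤ γ) (v : E3) : ‖bvec γ v‖ = 2 * ‖v‖ ^ (1 + γ) := by
  unfold bvec
  rw [norm_smul]
  rcases eq_or_ne v 0 with h | h
  · subst h; simp [Real.zero_rpow (by linarith : (1:ℝ) + γ ≠ 0)]
  · have hv : 0 < ‖v‖ := norm_pos_iff.mpr h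
    rw [show (1:ℝ) + γ = γ + 1 by ring, Real.rpow_add hv, Real.rpow_one]
    rw [Real.norm_eq_abs, abs_mul, abs_of_nonneg (Real.rpow_nonneg (norm_nonneg v) γ)]
    norm_num; ring

lemma frobNorm_le_sum (A : M3) : frobNorm A ≤ ∑ i, ∑ j, |A i j| := by
  unfold frobNorm frobSq
  have h1 : Matrix.trace (A * Aᵀ) = ∑ i, ∑ j, (A i j)^2 := by
    simp [Matrix.trace, Matrix.mul_apply, Matrix.diag, sq]
  rw [h1]
  have h2 : ∑ i, ∑ j, (A i j)^2 ≤ (∑ i, ∑ j, |A i j|)^2 := by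
    calc ∑ i, ∑ j, (A i j)^2 = ∑ i, ∑ j, |A i j|^2 := by simp [sq_abs]
      _ ≤ ∑ i, (∑ j, |A i j|)^2 := by
          apply Finset.sum_le_sum; intro i _
          exact Finset.sum_sq_le_sq_sum_of_nonneg (fun j _ => abs_nonneg _)
      _ ≤ (∑ i, ∑ j, |A i j|)^2 :=
          Finset.sum_sq_le_sq_sum_of_nonneg
            (fun i _ => Finset.sum_nonneg (fun j _ => abs_nonneg _))
  calc Real.sqrt (∑ i, ∑ j, (A i j)^2) ≤ Real.sqrt ((∑ i, ∑ j, |A i j|)^2) :=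
        Real.sqrt_le_sqrt h2
    _ = ∑ i, ∑ j, |A i j| :=
        Real.sqrt_sq (Finset.sum_nonneg (fun i _ => Finset.sum_nonneg (fun j _ => abs_nonneg _)))

lemma amat_apply (hγ0 : 0 ≤ γ) (v : E3) (i j : Fin 3) :
    amat γ v i j = (if i = j then ‖v‖ ^ (2 + γ) else 0) - ‖v‖ ^ γ * (v i * v j) := by
  unfold amat
  rcases eq_or_ne v 0 with h | h
  · subst h
    simp [Real.zero_rpow (by linarith : (2:ℝ) + γ ≠ 0)]
  · have hv : 0 < ‖v‖ := norm_pos_iff.mpr h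
    simp only [if_neg h]
    unfold proj3
    rw [Matrix.smul_apply, Matrix.sub_apply, Matrix.smul_apply, Matrix.vecMulVec_apply,
      Matrix.one_apply]
    have key : ‖v‖ ^ (2 + γ) * (‖v‖ ^ 2)⁻¹ = ‖v‖ ^ γ := by
      rw [show ((‖v‖:ℝ) ^ 2) = ‖v‖ ^ (2:ℝ) by rw [← Real.rpow_natCast ‖v‖ 2]; norm_num,
        ← Real.rpow_neg (norm_nonneg v), ← Real.rpow_add hv]
      norm_num
    rcases eq_or_ne i j with hij | hij
    · subst hij; simp only [if_pos rfl, eq_self_iff_true, if_true]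
      simp only [smul_eq_mul, mul_sub, mul_one]
      rw [show ‖v‖ ^ (2+γ) * ((‖v‖^2)⁻¹ * (v i * v i)) =
        ‖v‖ ^ (2 + γ) * (‖v‖ ^ 2)⁻¹ * (v i * v i) by ring, key]
    · simp only [if_neg hij]
      simp only [smul_eq_mul, mul_sub, mul_zero, zero_sub]
      rw [show ‖v‖ ^ (2+γ) * -((‖v‖^2)⁻¹ * (v i * v j)) =
        -(‖v‖ ^ (2 + γ) * (‖v‖ ^ 2)⁻¹ * (v i * v j)) by ring, key]

lemma amat_entry_abs (hγ0 : 0 ≤ γ) (v : E3) (i j : Fin 3) :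
    |amat γ v i j| ≤ 2 * ‖v‖ ^ (2 + γ) := by
  rw [amat_apply hγ0]
  set x := ‖v‖ with hx
  have hx0 : 0 ≤ x := norm_nonneg v
  have h1 : |if i = j then x ^ (2+γ) else 0| ≤ x ^ (2+γ) := by
    split
    · rw [abs_of_nonneg (Real.rpow_nonneg hx0 _)]
    · simp [Real.rpow_nonneg hx0]
  have h2 : |x ^ γ * (v i * v j)| ≤ x ^ (2 + γ) := by
    rw [abs_mul, abs_mul, abs_of_nonneg (Real.rpow_nonneg hx0 γ)]
    have e : x ^ (2+γ) = x * (x * x ^ γ) := by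
      rw [show (2:ℝ) + γ = 1 + (1 + γ) by ring, rpow_succ hx0 (by linarith), rpow_succ hx0 hγ0]
    rw [e]
    have hi := coord_abs_le v i
    have hj := coord_abs_le v j
    have hxγ : (0:ℝ) ≤ x ^ γ := Real.rpow_nonneg hx0 γ
    have hij2 : |v i| * |v j| ≤ x * x := mul_le_mul hi hj (abs_nonneg _) hx0
    calc x ^ γ * (|v i| * |v j|) ≤ x ^ γ * (x * x) := mul_le_mul_of_nonneg_left hij2 hxγ
      _ = x * (x * x ^ γ) := by ring
  calc |(if i = j then x ^ (2+γ) else 0) - x ^ γ * (v i * v j)|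
      ≤ |if i = j then x ^ (2+γ) else 0| + |x ^ γ * (v i * v j)| := absub _ _
    _ ≤ 2 * x ^ (2+γ) := by linarith

lemma bvec_lip_aux (hγ0 : 0 ≤ γ) (hγ1 : γ ≤ 1) (u u' : E3) (h : ‖u'‖ ≤ ‖u‖) :
    ‖bvec γ u - bvec γ u'‖ ≤ 2 * ‖u - u'‖ * (‖u‖ ^ γ + ‖u'‖ ^ γ) := by
  set x := ‖u‖; set y := ‖u'‖; set d := ‖u - u'‖ with hd
  have hdecomp : bvec γ u - bvec γ u' =
      (-2 * x ^ γ) • (u - u') + (-2 * (x ^ γ - y ^ γ)) • u' := by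
    unfold bvec; module
  have hxy : y ^ γ ≤ x ^ γ := Real.rpow_le_rpow (norm_nonneg u') h hγ0
  have hB := lemB hγ1 (norm_nonneg u') h
  have hdd : x - y ≤ d := norm_sub_norm_le u u'
  have hx0 : (0:ℝ) ≤ x ^ γ := Real.rpow_nonneg (norm_nonneg u) γ
  have hy0 : (0:ℝ) ≤ y ^ γ := Real.rpow_nonneg (norm_nonneg u') γ
  have hd0 : (0:ℝ) ≤ d := norm_nonneg _
  calc ‖bvec γ u - bvec γ u'‖
      ≤ ‖(-2 * x ^ γ) • (u - u')‖ + ‖(-2 * (x ^ γ - y ^ γ)) • u'‖ := by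
        rw [hdecomp]; exact norm_add_le _ _
    _ = 2 * x ^ γ * d + 2 * (x ^ γ - y ^ γ) * y := by
        rw [norm_smul, norm_smul, Real.norm_eq_abs, Real.norm_eq_abs]
        rw [show |(-2 : ℝ) * x ^ γ| = 2 * x ^ γ by rw [abs_mul]; simp [abs_of_nonneg hx0]]
        rw [show |(-2 : ℝ) * (x ^ γ - y ^ γ)| = 2 * (x ^ γ - y ^ γ) by
          rw [abs_mul]; simp [abs_of_nonneg (by linarith : (0:ℝ) ≤ x ^ γ - y ^ γ)]]
    _ ≤ 2 * d * (x ^ γ + y ^ γ) := by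
        have k1 : (x - y) * y ^ γ ≤ d * y ^ γ := mul_le_mul_of_nonneg_right hdd hy0
        nlinarith [hB, k1]

lemma bvec_lip (hγ0 : 0 ≤ γ) (hγ1 : γ ≤ 1) (u u' : E3) :
    ‖bvec γ u - bvec γ u'‖ ≤ 2 * ‖u - u'‖ * (‖u‖ ^ γ + ‖u'‖ ^ γ) := by
  rcases le_total ‖u'‖ ‖u‖ with h | h
  · exact bvec_lip_aux hγ0 hγ1 u u' h
  · have := bvec_lip_aux hγ0 hγ1 u' u h
    rw [norm_sub_rev (bvec γ u'), norm_sub_rev u'] at this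
    linarith

lemma amat_lip_aux (hγ0 : 0 ≤ γ) (hγ1 : γ ≤ 1) (u u' : E3) (h : ‖u'‖ ≤ ‖u‖) (i j : Fin 3) :
    |amat γ u i j - amat γ u' i j| ≤ 5 * ‖u - u'‖ * (‖u‖ ^ (1+γ) + ‖u'‖ ^ (1+γ)) := by
  rw [amat_apply hγ0, amat_apply hγ0]
  set x := ‖u‖ with hxdef; set y := ‖u'‖ with hydef; set d := ‖u - u'‖ with hddef
  have hx0 : (0:ℝ) ≤ x := norm_nonneg u
  have hy0 : (0:ℝ) ≤ y := norm_nonneg u'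
  have hd0 : (0:ℝ) ≤ d := norm_nonneg _
  have hdd : x - y ≤ d := norm_sub_norm_le u u'
  have hai := coord_abs_le u i
  have haj := coord_abs_le u j
  have hbi := coord_abs_le u' i
  have hbj := coord_abs_le u' j
  have hci : |u i - u' i| ≤ d := by
    have := coord_abs_le (u - u') i
    simpa using this
  have hcj : |u j - u' j| ≤ d := by
    have := coord_abs_le (u - u') j
    simpa using this
  have hxγ : (0:ℝ) ≤ x ^ γ := Real.rpow_nonneg hx0 γ
  have hyγ : (0:ℝ) ≤ y ^ γ := Real.rpow_nonneg hy0 γ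
  have hx1γ : (0:ℝ) ≤ x ^ (1+γ) := Real.rpow_nonneg hx0 _
  have hy1γ : (0:ℝ) ≤ y ^ (1+γ) := Real.rpow_nonneg hy0 _
  -- part 1 : diagonal term
  have h1 : |x ^ (2+γ) - y ^ (2+γ)| ≤ 2 * d * (x ^ (1+γ) + y ^ (1+γ)) := by
    have hmono : y ^ (2+γ) ≤ x ^ (2+γ) := Real.rpow_le_rpow hy0 h (by linarith)
    rw [abs_of_nonneg (by linarith)]
    have := lemD hγ0 hγ1 hy0 h
    nlinarith
  -- part 2 : rank-one term
  have h2 : |x ^ γ * (u i * u j) - y ^ γ * (u' i * u' j)| ≤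
      3 * d * (x ^ (1+γ) + y ^ (1+γ)) := by
    have e : x ^ γ * (u i * u j) - y ^ γ * (u' i * u' j) =
        x ^ γ * (u i * u j - u' i * u' j) + (x ^ γ - y ^ γ) * (u' i * u' j) := by ring
    have hprod : |u i * u j - u' i * u' j| ≤ x * d + d * y := by
      have e2 : u i * u j - u' i * u' j = u i * (u j - u' j) + (u i - u' i) * u' j := by ring
      calc |u i * u j - u' i * u' j| = |u i * (u j - u' j) + (u i - u' i) * u' j| := by rw [e2]
        _ ≤ |u i * (u j - u' j)| + |(u i - u' i) * u' j| := abs_add_le _ _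
        _ = |u i| * |u j - u' j| + |u i - u' i| * |u' j| := by rw [abs_mul, abs_mul]
        _ ≤ x * d + d * y := by
            have := abs_nonneg (u i)
            have := abs_nonneg (u' j)
            have := abs_nonneg (u j - u' j)
            have := abs_nonneg (u i - u' i)
            nlinarith
    have hterm1 : |x ^ γ * (u i * u j - u' i * u' j)| ≤ 2 * d * x ^ (1+γ) := by
      rw [abs_mul, abs_of_nonneg hxγ]
      have hxx : x ^ γ * x = x ^ (1+γ) := by rw [mul_comm]; exact (rpow_succ hx0 hγ0).symm
      have hxy2 : x ^ γ * y ≤ x ^ (1+γ) := by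
        calc x ^ γ * y ≤ x ^ γ * x := mul_le_mul_of_nonneg_left h hxγ
          _ = x ^ (1+γ) := hxx
      nlinarith [mul_le_mul_of_nonneg_left hprod hxγ]
    have hterm2 : |(x ^ γ - y ^ γ) * (u' i * u' j)| ≤ d * y ^ (1+γ) := by
      have hxyγ : y ^ γ ≤ x ^ γ := Real.rpow_le_rpow hy0 h hγ0
      rw [abs_mul, abs_of_nonneg (by linarith : (0:ℝ) ≤ x ^ γ - y ^ γ), abs_mul]
      have hB := lemB hγ1 hy0 h
      have hyy : y * y ^ γ = y ^ (1+γ) := (rpow_succ hy0 hγ0).symm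
      calc (x ^ γ - y ^ γ) * (|u' i| * |u' j|)
          ≤ (x ^ γ - y ^ γ) * (y * y) :=
            mul_le_mul_of_nonneg_left (mul_le_mul hbi hbj (abs_nonneg _) hy0) (by linarith)
        _ = ((x ^ γ - y ^ γ) * y) * y := by ring
        _ ≤ ((x - y) * y ^ γ) * y := mul_le_mul_of_nonneg_right hB hy0
        _ ≤ (d * y ^ γ) * y :=
            mul_le_mul_of_nonneg_right (mul_le_mul_of_nonneg_right hdd hyγ) hy0
        _ = d * (y * y ^ γ) := by ring
        _ = d * y ^ (1+γ) := by rw [hyy]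
    calc |x ^ γ * (u i * u j) - y ^ γ * (u' i * u' j)|
        = |x ^ γ * (u i * u j - u' i * u' j) + (x ^ γ - y ^ γ) * (u' i * u' j)| := by rw [e]
      _ ≤ |x ^ γ * (u i * u j - u' i * u' j)| + |(x ^ γ - y ^ γ) * (u' i * u' j)| := abs_add_le _ _
      _ ≤ 3 * d * (x ^ (1+γ) + y ^ (1+γ)) := by nlinarith
  rcases eq_or_ne i j with hij | hij
  · subst hij
    simp only [if_pos rfl]
    calc |(x ^ (2+γ) - x ^ γ * (u i * u i)) - (y ^ (2+γ) - y ^ γ * (u' i * u' i))|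
        = |(x ^ (2+γ) - y ^ (2+γ)) - (x ^ γ * (u i * u i) - y ^ γ * (u' i * u' i))| := by
          congr 1; ring
      _ ≤ |x ^ (2+γ) - y ^ (2+γ)| + |x ^ γ * (u i * u i) - y ^ γ * (u' i * u' i)| := absub _ _
      _ ≤ 5 * d * (x ^ (1+γ) + y ^ (1+γ)) := by linarith
  · simp only [if_neg hij]
    have hS : (0:ℝ) ≤ d * (x ^ (1+γ) + y ^ (1+γ)) := mul_nonneg hd0 (by linarith)
    calc |(0 - x ^ γ * (u i * u j)) - (0 - y ^ γ * (u' i * u' j))|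
        = |y ^ γ * (u' i * u' j) - x ^ γ * (u i * u j)| := by congr 1; ring
      _ = |x ^ γ * (u i * u j) - y ^ γ * (u' i * u' j)| := abs_sub_comm _ _
      _ ≤ 3 * d * (x ^ (1+γ) + y ^ (1+γ)) := h2
      _ ≤ 5 * d * (x ^ (1+γ) + y ^ (1+γ)) := by nlinarith [hS]

lemma amat_lip (hγ0 : 0 ≤ γ) (hγ1 : γ ≤ 1) (u u' : E3) (i j : Fin 3) :
    |amat γ u i j - amat γ u' i j| ≤ 5 * ‖u - u'‖ * (‖u‖ ^ (1+γ) + ‖u'‖ ^ (1+γ)) := by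
  rcases le_total ‖u'‖ ‖u‖ with h | h
  · exact amat_lip_aux hγ0 hγ1 u u' h i j
  · have := amat_lip_aux hγ0 hγ1 u' u h i j
    rw [abs_sub_comm, norm_sub_rev u'] at this
    linarith

lemma continuous_bvec (hγ0 : 0 ≤ γ) : Continuous (bvec γ) := by
  unfold bvec
  exact (continuous_const.mul ((Real.continuous_rpow_const hγ0).comp continuous_norm)).smul
    continuous_id

lemma continuous_amat_entry (hγ0 : 0 ≤ γ) (i j : Fin 3) :
    Continuous (fun u : E3 => amat γ u i j) := by
  have heq : (fun u : E3 => amat γ u i j) =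
      fun u : E3 => (if i = j then ‖u‖ ^ (2+γ) else 0) - ‖u‖ ^ γ * (u i * u j) := by
    funext u; exact amat_apply hγ0 u i j
  rw [heq]
  have hcoord : ∀ k : Fin 3, Continuous (fun u : E3 => u k) := fun k =>
    (EuclideanSpace.proj k : E3 →L[ℝ] ℝ).continuous
  have h1 : Continuous (fun u : E3 => ‖u‖ ^ (2+γ)) :=
    (Real.continuous_rpow_const (by linarith)).comp continuous_norm
  have h2 : Continuous (fun u : E3 => ‖u‖ ^ γ) :=
    (Real.continuous_rpow_const hγ0).comp continuous_norm
  rcases eq_or_ne i j with hij | hij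
  · simp only [if_pos hij]
    exact h1.sub (h2.mul ((hcoord i).mul (hcoord j)))
  · simp only [if_neg hij]
    exact continuous_const.sub (h2.mul ((hcoord i).mul (hcoord j)))

end Pointwise

theorem mean_field_coefficients_bounds (γ : ℝ) (hγ : γ ∈ Set.Icc (0:ℝ) 1) :
    ∃ C : ℝ, 0 < C ∧ ∀ (f : Measure E3), IsProbabilityMeasure f →
      Integrable (fun v : E3 => ‖v‖ ^ (2 + γ)) f →
      ∀ v w : E3,
        ‖bInt γ f v‖ ≤ C * (‖v‖ ^ (1 + γ) + mom (1 + γ) f) ∧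
        ‖bInt γ f v - bInt γ f w‖ ≤ C * ‖v - w‖ * (‖v‖ ^ γ + ‖w‖ ^ γ + mom γ f) ∧
        frobNorm (aInt γ f v) ≤ C * (‖v‖ ^ (2 + γ) + mom (2 + γ) f) ∧
        frobNorm (aInt γ f v - aInt γ f w)
          ≤ C * ‖v - w‖ * (‖v‖ ^ (1 + γ) + ‖w‖ ^ (1 + γ) + mom (1 + γ) f) := by
  obtain ⟨hγ0, hγ1⟩ := hγ
  refine ⟨1000, by norm_num, ?_⟩
  intro f hf hint v w
  -- basic integrability facts
  have hm : ∀ q : ℝ, 0 ≤ q → q ≤ 2 + γ → Integrable (fun u : E3 => ‖u‖ ^ q) f := by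
    intro q hq0 hq2
    apply Integrable.mono' ((integrable_const (1:ℝ)).add hint)
    · exact (((Real.continuous_rpow_const hq0).comp continuous_norm)).aestronglyMeasurable
    · filter_upwards with u
      simp only [Pi.add_apply]
      rw [Real.norm_eq_abs, abs_of_nonneg (Real.rpow_nonneg (norm_nonneg u) q)]
      rcases le_total ‖u‖ 1 with h | h
      · have := Real.rpow_le_one (norm_nonneg u) h hq0
        have := Real.rpow_nonneg (norm_nonneg u) (2+γ)
        linarith
      · have := Real.rpow_le_rpow_of_exponent_le h hq2
        linarith
  have hshiftbd : ∀ (z : E3) (q : ℝ), 0 ≤ q → q ≤ 3 → ∀ u : E3,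
      ‖z - u‖ ^ q ≤ 8 * (‖z‖ ^ q + ‖u‖ ^ q) := by
    intro z q hq0 hq3 u
    calc ‖z - u‖ ^ q ≤ (‖z‖ + ‖u‖) ^ q :=
          Real.rpow_le_rpow (norm_nonneg _) (norm_sub_le z u) hq0
      _ ≤ 8 * (‖z‖ ^ q + ‖u‖ ^ q) := lemF hq0 hq3 (norm_nonneg z) (norm_nonneg u)
  have hshift : ∀ (z : E3) (q : ℝ), 0 ≤ q → q ≤ 2 + γ →
      Integrable (fun u : E3 => ‖z - u‖ ^ q) f := by
    intro z q hq0 hq2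
    apply Integrable.mono'
      (((integrable_const (8 * ‖z‖ ^ q)).add ((hm q hq0 hq2).const_mul 8)))
    · exact ((Real.continuous_rpow_const hq0).comp
        (continuous_norm.comp (continuous_const.sub continuous_id))).aestronglyMeasurable
    · filter_upwards with u
      simp only [Pi.add_apply]
      rw [Real.norm_eq_abs, abs_of_nonneg (Real.rpow_nonneg (norm_nonneg _) q)]
      have := hshiftbd z q hq0 (by linarith) u
      linarith
  have hbint : ∀ z : E3, Integrable (fun u : E3 => bvec γ (z - u)) f := by
    intro z
    apply Integrable.mono' ((hshift z (1+γ) (by linarith) (by linarith)).const_mul 2)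
    · exact ((continuous_bvec hγ0).comp (continuous_const.sub continuous_id)).aestronglyMeasurable
    · filter_upwards with u
      rw [norm_bvec hγ0]
  have haint : ∀ (z : E3) (i j : Fin 3), Integrable (fun u : E3 => amat γ (z - u) i j) f := by
    intro z i j
    apply Integrable.mono' ((hshift z (2+γ) (by linarith) le_rfl).const_mul 2)
    · exact ((continuous_amat_entry hγ0 i j).comp
        (continuous_const.sub continuous_id)).aestronglyMeasurable
    · filter_upwards with u
      rw [Real.norm_eq_abs]
      exact amat_entry_abs hγ0 _ i j
  have hmom : ∀ q : ℝ, 0 ≤ q → 0 ≤ mom q f := fun q hq =>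
    integral_nonneg fun u => Real.rpow_nonneg (norm_nonneg u) q
  have hlin : ∀ (c1 c2 q : ℝ), 0 ≤ q → q ≤ 2 + γ →
      (∫ u, (c1 + c2 * ‖u‖ ^ q) ∂f) = c1 + c2 * mom q f := by
    intro c1 c2 q hq0 hq2
    rw [integral_add (integrable_const c1) ((hm q hq0 hq2).const_mul c2),
      integral_const, integral_const_mul]
    simp [mom]
  have hd0 : (0:ℝ) ≤ ‖v - w‖ := norm_nonneg _
  have hv1 : (0:ℝ) ≤ ‖v‖ ^ (1+γ) := Real.rpow_nonneg (norm_nonneg v) _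
  have hw1 : (0:ℝ) ≤ ‖w‖ ^ (1+γ) := Real.rpow_nonneg (norm_nonneg w) _
  have hv2 : (0:ℝ) ≤ ‖v‖ ^ (2+γ) := Real.rpow_nonneg (norm_nonneg v) _
  have hvγ : (0:ℝ) ≤ ‖v‖ ^ γ := Real.rpow_nonneg (norm_nonneg v) γ
  have hwγ : (0:ℝ) ≤ ‖w‖ ^ γ := Real.rpow_nonneg (norm_nonneg w) γ
  refine ⟨?_, ?_, ?_, ?_⟩
  -- (i)
  · calc ‖bInt γ f v‖ ≤ ∫ u, ‖bvec γ (v - u)‖ ∂f := norm_integral_le_integral_norm _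
      _ ≤ ∫ u, (16 * ‖v‖ ^ (1+γ) + 16 * ‖u‖ ^ (1+γ)) ∂f := by
          apply integral_mono ((hbint v).norm)
          · exact (integrable_const _).add ((hm (1+γ) (by linarith) (by linarith)).const_mul 16)
          · intro u
            dsimp only
            rw [norm_bvec hγ0]
            have := hshiftbd v (1+γ) (by linarith) (by linarith) u
            linarith
      _ = 16 * ‖v‖ ^ (1+γ) + 16 * mom (1+γ) f := by
          have := hlin (16 * ‖v‖ ^ (1+γ)) 16 (1+γ) (by linarith) (by linarith)
          simpa using this
      _ ≤ 1000 * (‖v‖ ^ (1+γ) + mom (1+γ) f) := by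
          have := hmom (1+γ) (by linarith)
          nlinarith
  -- (ii)
  · have hsub : bInt γ f v - bInt γ f w = ∫ u, (bvec γ (v - u) - bvec γ (w - u)) ∂f :=
      (integral_sub (hbint v) (hbint w)).symm
    rw [hsub]
    calc ‖∫ u, (bvec γ (v - u) - bvec γ (w - u)) ∂f‖
        ≤ ∫ u, ‖bvec γ (v - u) - bvec γ (w - u)‖ ∂f := norm_integral_le_integral_norm _
      _ ≤ ∫ u, (16 * ‖v - w‖ * (‖v‖ ^ γ + ‖w‖ ^ γ) + (40 * ‖v - w‖) * ‖u‖ ^ γ) ∂f := by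
          apply integral_mono (((hbint v).sub (hbint w)).norm)
          · exact (integrable_const _).add ((hm γ hγ0 (by linarith)).const_mul _)
          · intro u
            simp only [Pi.sub_apply]
            have hl := bvec_lip hγ0 hγ1 (v - u) (w - u)
            have he : v - u - (w - u) = v - w := by abel
            rw [he] at hl
            have h1 := hshiftbd v γ hγ0 (by linarith) u
            have h2 := hshiftbd w γ hγ0 (by linarith) u
            have huγ : (0:ℝ) ≤ ‖u‖ ^ γ := Real.rpow_nonneg (norm_nonneg u) γ
            have hvuγ : (0:ℝ) ≤ ‖v - u‖ ^ γ := Real.rpow_nonneg (norm_nonneg _) γ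
            have hwuγ : (0:ℝ) ≤ ‖w - u‖ ^ γ := Real.rpow_nonneg (norm_nonneg _) γ
            have k1 := mul_le_mul_of_nonneg_left h1 hd0
            have k2 := mul_le_mul_of_nonneg_left h2 hd0
            nlinarith [k1, k2, hl]
      _ = 16 * ‖v - w‖ * (‖v‖ ^ γ + ‖w‖ ^ γ) + (40 * ‖v - w‖) * mom γ f :=
          hlin _ _ γ hγ0 (by linarith)
      _ ≤ 1000 * ‖v - w‖ * (‖v‖ ^ γ + ‖w‖ ^ γ + mom γ f) := by
          have := hmom γ hγ0
          nlinarith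
  -- (iii)
  · have hentry : ∀ i j : Fin 3, |aInt γ f v i j| ≤ 16 * (‖v‖ ^ (2+γ) + mom (2+γ) f) := by
      intro i j
      have : aInt γ f v i j = ∫ u, amat γ (v - u) i j ∂f := rfl
      rw [this]
      calc |∫ u, amat γ (v - u) i j ∂f| ≤ ∫ u, |amat γ (v - u) i j| ∂f := by
            simpa [Real.norm_eq_abs] using
              norm_integral_le_integral_norm (fun u : E3 => amat γ (v - u) i j) (μ := f)
        _ ≤ ∫ u, (16 * ‖v‖ ^ (2+γ) + 16 * ‖u‖ ^ (2+γ)) ∂f := by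
            apply integral_mono ((haint v i j).abs)
            · exact (integrable_const _).add (hint.const_mul 16)
            · intro u
              dsimp only
              have h1 := amat_entry_abs hγ0 (v - u) i j
              have h2 := hshiftbd v (2+γ) (by linarith) (by linarith) u
              linarith
        _ = 16 * ‖v‖ ^ (2+γ) + 16 * mom (2+γ) f := by
            have := hlin (16 * ‖v‖ ^ (2+γ)) 16 (2+γ) (by linarith) le_rfl
            simpa using this
        _ ≤ 16 * (‖v‖ ^ (2+γ) + mom (2+γ) f) := by linarith
    calc frobNorm (aInt γ f v) ≤ ∑ i, ∑ j, |aInt γ f v i j| := frobNorm_le_sum _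
      _ ≤ ∑ i : Fin 3, ∑ j : Fin 3, 16 * (‖v‖ ^ (2+γ) + mom (2+γ) f) := by
          apply Finset.sum_le_sum; intro i _
          apply Finset.sum_le_sum; intro j _
          exact hentry i j
      _ = 144 * (‖v‖ ^ (2+γ) + mom (2+γ) f) := by
          simp [Finset.sum_const]; ring
      _ ≤ 1000 * (‖v‖ ^ (2+γ) + mom (2+γ) f) := by
          have := hmom (2+γ) (by linarith)
          nlinarith
  -- (iv)
  · have hentry : ∀ i j : Fin 3, |(aInt γ f v - aInt γ f w) i j| ≤
        40 * ‖v - w‖ * (‖v‖ ^ (1+γ) + ‖w‖ ^ (1+γ) + 2 * mom (1+γ) f) := by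
      intro i j
      have hrepr : (aInt γ f v - aInt γ f w) i j =
          ∫ u, (amat γ (v - u) i j - amat γ (w - u) i j) ∂f := by
        rw [Matrix.sub_apply]
        exact (integral_sub (haint v i j) (haint w i j)).symm
      rw [hrepr]
      calc |∫ u, (amat γ (v - u) i j - amat γ (w - u) i j) ∂f|
          ≤ ∫ u, |amat γ (v - u) i j - amat γ (w - u) i j| ∂f := by
            simpa [Real.norm_eq_abs] using
              norm_integral_le_integral_norm
                (fun u : E3 => amat γ (v - u) i j - amat γ (w - u) i j) (μ := f)
        _ ≤ ∫ u, (40 * ‖v - w‖ * (‖v‖ ^ (1+γ) + ‖w‖ ^ (1+γ)) +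
              (80 * ‖v - w‖) * ‖u‖ ^ (1+γ)) ∂f := by
            apply integral_mono (((haint v i j).sub (haint w i j)).abs)
            · exact (integrable_const _).add
                ((hm (1+γ) (by linarith) (by linarith)).const_mul _)
            · intro u
              simp only [Pi.sub_apply]
              have hl := amat_lip hγ0 hγ1 (v - u) (w - u) i j
              have he : v - u - (w - u) = v - w := by abel
              rw [he] at hl
              have h1 := hshiftbd v (1+γ) (by linarith) (by linarith) u
              have h2 := hshiftbd w (1+γ) (by linarith) (by linarith) u
              have hu1 : (0:ℝ) ≤ ‖u‖ ^ (1+γ) := Real.rpow_nonneg (norm_nonneg u) _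
              have hvu1 : (0:ℝ) ≤ ‖v - u‖ ^ (1+γ) := Real.rpow_nonneg (norm_nonneg _) _
              have hwu1 : (0:ℝ) ≤ ‖w - u‖ ^ (1+γ) := Real.rpow_nonneg (norm_nonneg _) _
              have k1 := mul_le_mul_of_nonneg_left h1 hd0
              have k2 := mul_le_mul_of_nonneg_left h2 hd0
              nlinarith [k1, k2, hl]
        _ = 40 * ‖v - w‖ * (‖v‖ ^ (1+γ) + ‖w‖ ^ (1+γ)) + (80 * ‖v - w‖) * mom (1+γ) f :=
            hlin _ _ (1+γ) (by linarith) (by linarith)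
        _ ≤ 40 * ‖v - w‖ * (‖v‖ ^ (1+γ) + ‖w‖ ^ (1+γ) + 2 * mom (1+γ) f) := by
            have := hmom (1+γ) (by linarith)
            nlinarith
    calc frobNorm (aInt γ f v - aInt γ f w) ≤ ∑ i, ∑ j, |(aInt γ f v - aInt γ f w) i j| :=
          frobNorm_le_sum _
      _ ≤ ∑ i : Fin 3, ∑ j : Fin 3,
            40 * ‖v - w‖ * (‖v‖ ^ (1+γ) + ‖w‖ ^ (1+γ) + 2 * mom (1+γ) f) := by
          apply Finset.sum_le_sum; intro i _
          apply Finset.sum_le_sum; intro j _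
          exact hentry i j
      _ = 360 * ‖v - w‖ * (‖v‖ ^ (1+γ) + ‖w‖ ^ (1+γ) + 2 * mom (1+γ) f) := by
          simp [Finset.sum_const]; ring
      _ ≤ 1000 * ‖v - w‖ * (‖v‖ ^ (1+γ) + ‖w‖ ^ (1+γ) + mom (1+γ) f) := by
          have := hmom (1+γ) (by linarith)
          nlinarith
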